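/- The extended Miura map operator identity: for constants θ, γ, ε with ε² = 1, and h a differential polynomial, if v_t is defined by v_t = ∂(ε∂+2v)(h), then the operator identity θ·v_t + (ε∂ + θv)∘(−θ·h_x + 2h∂) = ((2−θ)·h_x + 2h∂)∘(ε∂ + θv) holds, where h_x = ∂(h), v_t = ∂(εh_x + 2vh), composition is composition of differential operators, and functions act by multiplication. -/
import Mathlib


/-- **The extended Miura map operator identity (9.49).**  In a commutative
differential ring `(R, d)` with constants `θ, ε` (`dθ = dε = 0`, `ε² = 1`) and
elements `v, h`, setting `v_t = ∂(ε∂ + 2v)(h) = ∂(ε h_x + 2vh)`, the operator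
identity `θ·v_t + (ε∂ + θv)∘(−θ h_x + 2h∂) = ((2−θ) h_x + 2h∂)∘(ε∂ + θv)` holds;
it is stated pointwise, applied to an arbitrary `φ`. -/
theorem stmt17 {R : Type*} [CommRing R] (d : R →+ R)
    (hleib : ∀ a b : R, d (a * b) = d a * b + a * d b)
    (v h θ ε : R) (hε2 : ε * ε = 1) (hdθ : d θ = 0) (hdε : d ε = 0) :
    ∀ φ : R,
      θ * d (ε * d h + 2 * (v * h)) * φ
        + (ε * d (-θ * d h * φ + 2 * h * d φ)
            + θ * v * (-θ * d h * φ + 2 * h * d φ))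
      = (2 - θ) * d h * (ε * d φ + θ * v * φ)
        + 2 * h * d (ε * d φ + θ * v * φ) := by
  intro φ
  have h2 : ∀ a : R, d (2 * a) = 2 * d a := by
    intro a
    have : (2:R) * a = a + a := by ring
    rw [this, map_add]; ring
  have hd1 : d 1 = 0 := by
    have := hleib 1 1
    simp at this
    exact this
  have hd2 : d (2:R) = 0 := by
    have : (2:R) = 1 + 1 := by norm_num
    rw [this, map_add, hd1, add_zero]
  simp only [hd2, map_add, map_neg, hleib, h2, hdθ, hdε]
  ring
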